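/- (Invariance of symmetric roots under isomorphisms.) Let A, B, C, D ∈ K with AD − BC ≠ 0 and Cα_m + D ≠ 0 for all m, and set α'_m := (Aα_m + B)/(Cα_m + D) for m = 1, …, 2g+2. Then the α'_m are pairwise distinct, and for all pairwise distinct indices i, j, k, any symmetric ratio p for (i,j) computed from the α's, and any symmetric ratio p' for (i,j) computed from the α''s, the associated symmetric roots satisfy (ℓ'_{ijk})^{4g} = (ℓ_{ijk})^{4g}; that is, the symmetric roots of a hyperelliptic curve are invariant, up to 4g-th roots of unity, under a common Möbius transformation of the roots of the defining polynomial. -/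

import Mathlib

open Finset

/-- (Invariance of symmetric roots under isomorphisms.) If
`α' m = (a·α m + b)/(c·α m + e)` is a common Möbius transformation (with `a·e − b·c ≠ 0`
and all denominators nonzero) of the roots `α m`, then the `α' m` are pairwise distinct,
and for all pairwise distinct `i, j, k`, any symmetric ratio `p` for `(i,j)` computed from
the `α`'s and any symmetric ratio `p'` for `(i,j)` computed from the `α'`'s, the associated
symmetric roots satisfy `(ℓ'_{ijk})^{4g} = (ℓ_{ijk})^{4g}`. -/
theorem symmetric_roots_moebius_invariance
    (g : ℕ) (hg : 1 ≤ g) (K : Type*) [Field K]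
    (α : Fin (2*g+2) → K) (hα : Function.Injective α)
    (a b c e : K) (hdet : a*e - b*c ≠ 0) (hden : ∀ m, c * α m + e ≠ 0)
    (α' : Fin (2*g+2) → K)
    (hα' : ∀ m, α' m = (a * α m + b) / (c * α m + e))
    (d : Fin (2*g+2) → K)
    (hd : ∀ m, d m = ∏ n ∈ univ.erase m, (α m - α n))
    (d' : Fin (2*g+2) → K)
    (hd' : ∀ m, d' m = ∏ n ∈ univ.erase m, (α' m - α' n)) :
    Function.Injective α' ∧
    ∀ i j k : Fin (2*g+2), i ≠ j → i ≠ k → j ≠ k →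
      ∀ p : K, p ^ (4*g) = (d j / d i) ^ 2 →
        ∀ p' : K, p' ^ (4*g) = (d' j / d' i) ^ 2 →
          (p' * (α' i - α' k) / (α' j - α' k)) ^ (4*g) =
            (p * (α i - α k) / (α j - α k)) ^ (4*g) := by
  set Δ := a*e - b*c with hΔ
  have L1 : ∀ m n, α' m - α' n = Δ * (α m - α n) / ((c * α m + e) * (c * α n + e)) := by
    intro m n
    rw [hα' m, hα' n]
    rw [div_sub_div _ _ (hden m) (hden n), hΔ]
    congr 1
    ring
  have hdiff : ∀ m n : Fin (2*g+2), m ≠ n → α m - α n ≠ 0 := by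
    intro m n hmn
    exact sub_ne_zero.mpr (fun h => hmn (hα h))
  have hdiff' : ∀ m n : Fin (2*g+2), m ≠ n → α' m - α' n ≠ 0 := by
    intro m n hmn
    rw [L1]
    exact div_ne_zero (mul_ne_zero hdet (hdiff m n hmn)) (mul_ne_zero (hden m) (hden n))
  have hinj : Function.Injective α' := by
    intro m n h
    by_contra hmn
    exact hdiff' m n hmn (sub_eq_zero.mpr h)
  refine ⟨hinj, ?_⟩
  have hdne : ∀ m, d m ≠ 0 := by
    intro m
    rw [hd m]
    exact prod_ne_zero_iff.mpr (fun n hn => hdiff m n (Finset.ne_of_mem_erase hn).symm)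
  set P := ∏ n, (c * α n + e) with hP
  have hPne : P ≠ 0 := prod_ne_zero_iff.mpr (fun n _ => hden n)
  have hcard : ∀ m : Fin (2*g+2), (univ.erase m).card = 2*g+1 := by
    intro m
    rw [card_erase_of_mem (mem_univ m), card_univ, Fintype.card_fin]
    omega
  have L3 : ∀ m, d' m = Δ^(2*g+1) * d m / ((c * α m + e)^(2*g) * P) := by
    intro m
    rw [hd' m]
    have step1 : ∏ n ∈ univ.erase m, (α' m - α' n)
        = ∏ n ∈ univ.erase m, (Δ * (α m - α n) / ((c * α m + e) * (c * α n + e))) := by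
      exact Finset.prod_congr rfl (fun n _ => L1 m n)
    rw [step1, prod_div_distrib, prod_mul_distrib, prod_mul_distrib, prod_const, prod_const,
      hcard m, ← hd m]
    have hprodne : (∏ n ∈ univ.erase m, (c * α n + e)) ≠ 0 :=
      prod_ne_zero_iff.mpr (fun n _ => hden n)
    rw [div_eq_div_iff
        (mul_ne_zero (pow_ne_zero _ (hden m)) hprodne)
        (mul_ne_zero (pow_ne_zero _ (hden m)) hPne)]
    have hPsplit : P = (c * α m + e) * ∏ n ∈ univ.erase m, (c * α n + e) :=
      (Finset.mul_prod_erase univ _ (mem_univ m)).symm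
    rw [hPsplit]
    ring
  intro i j k hij hik hjk p hp p' hp'
  have hui := hden i
  have huj := hden j
  have huk := hden k
  have h1 := hdiff i k hik
  have h2 := hdiff j k hjk
  have hdi := hdne i
  have hdj := hdne j
  have hq : p' ^ (4*g) = p ^ (4*g) * (c * α i + e) ^ (4*g) / (c * α j + e) ^ (4*g) := by
    rw [hp', hp, L3 i, L3 j]
    have hΔ21 : Δ ^ (2*g+1) ≠ 0 := pow_ne_zero _ hdet
    field_simp
    ring
  rw [L1 i k, L1 j k]
  simp only [div_pow, mul_pow]
  rw [hq]
  have eU : (c * α i + e) ^ (4*g) ≠ 0 := pow_ne_zero _ hui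
  have eV : (c * α j + e) ^ (4*g) ≠ 0 := pow_ne_zero _ huj
  have eW : (c * α k + e) ^ (4*g) ≠ 0 := pow_ne_zero _ huk
  have eD : Δ ^ (4*g) ≠ 0 := pow_ne_zero _ hdet
  have eB : (α j - α k) ^ (4*g) ≠ 0 := pow_ne_zero _ h2
  set X := p ^ (4*g)
  set U := (c * α i + e) ^ (4*g)
  set V := (c * α j + e) ^ (4*g)
  set W := (c * α k + e) ^ (4*g)
  set D2 := Δ ^ (4*g)
  set A4 := (α i - α k) ^ (4*g)
  set B4 := (α j - α k) ^ (4*g)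
  field_simp
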